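/- Let H be a finite-dimensional quasitriangular Hopf algebra (H, R_H) and A a coquasitriangular Hopf algebra (A, R_A), dually paired via a Hopf pairing ⟨·,·⟩ : H ⊗ A → C compatible with the (co)quasitriangular structures, and let D be an H-module algebra and B an A-comodule coalgebra with a bilinear pairing ⟨·,·⟩ : D ⊗ B → C satisfying ⟨d, bc⟩ = ⟨d⁽¹⁾, b⟩⟨d⁽²⁾, c⟩-type duality and the compatibility ⟨h ▷ d, b⟩ = ⟨h, b⁽¹⁾⟩⟨d, b⁽⁰⁾⟩ for the H-action and A-coaction. Then the bilinear form on the smash/biproduct spaces defined by ⟨d ⊗ h, b ⊗ a⟩ := ⟨d, b⟩⟨h, a⟩ satisfies the multiplicativity axiom of a Hopf pairing with respect to the smash product multiplication on D ⊗ H and the bosonized coproduct on B ⊗ A. -/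
import Mathlib


open TensorProduct Coalgebra

noncomputable section

namespace QG

variable {A : Type*} [Semiring A] [Bialgebra ℂ A]

/-- Multiplication of `ℂ` as a linear map. -/
def mulC : ℂ ⊗[ℂ] ℂ →ₗ[ℂ] ℂ := LinearMap.mul' ℂ ℂ

/-- The comultiplication of the tensor-square coalgebra,
`a ⊗ b ↦ (a⁽¹⁾ ⊗ b⁽¹⁾) ⊗ (a⁽²⁾ ⊗ b⁽²⁾)`. -/
def comul2 : A ⊗[ℂ] A →ₗ[ℂ] (A ⊗[ℂ] A) ⊗[ℂ] (A ⊗[ℂ] A) :=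
  (tensorTensorTensorComm ℂ A A A A).toLinearMap ∘ₗ TensorProduct.map comul comul

/-- Convolution product of two linear functionals on `A ⊗ A`. -/
def convMul (R S : A ⊗[ℂ] A →ₗ[ℂ] ℂ) : A ⊗[ℂ] A →ₗ[ℂ] ℂ :=
  mulC ∘ₗ TensorProduct.map R S ∘ₗ comul2

/-- `ε ⊗ ε` as a linear functional on `A ⊗ A`. -/
def counit2 : A ⊗[ℂ] A →ₗ[ℂ] ℂ :=
  mulC ∘ₗ TensorProduct.map counit counit

/-- A coquasitriangular structure on the bialgebra `A`:  a convolution-invertible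
bilinear form `R` satisfying `R(ab ⊗ c) = R(a ⊗ c⁽¹⁾)R(b ⊗ c⁽²⁾)`,
`R(a ⊗ bc) = R(a⁽¹⁾ ⊗ c)R(a⁽²⁾ ⊗ b)` and the quasi-commutativity
`b⁽¹⁾a⁽¹⁾ R(a⁽²⁾ ⊗ b⁽²⁾) = R(a⁽¹⁾ ⊗ b⁽¹⁾) a⁽²⁾b⁽²⁾`, all stated as equalities of
linear maps. -/
structure IsCoquasitriangular (R : A ⊗[ℂ] A →ₗ[ℂ] ℂ) : Prop where
  convInv : ∃ Ri : A ⊗[ℂ] A →ₗ[ℂ] ℂ, convMul R Ri = counit2 ∧ convMul Ri R = counit2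
  mul_left : R ∘ₗ LinearMap.rTensor A (LinearMap.mul' ℂ A)
      = mulC ∘ₗ TensorProduct.map R R ∘ₗ (tensorTensorTensorComm ℂ A A A A).toLinearMap
          ∘ₗ LinearMap.lTensor (A ⊗[ℂ] A) comul
  mul_right : R ∘ₗ LinearMap.lTensor A (LinearMap.mul' ℂ A)
      = mulC ∘ₗ TensorProduct.map R R ∘ₗ (tensorTensorTensorComm ℂ A A A A).toLinearMap
          ∘ₗ LinearMap.lTensor (A ⊗[ℂ] A) (TensorProduct.comm ℂ A A).toLinearMap
          ∘ₗ LinearMap.rTensor (A ⊗[ℂ] A) comul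
  quasi_comm : (TensorProduct.rid ℂ A).toLinearMap ∘ₗ
        TensorProduct.map (LinearMap.mul' ℂ A ∘ₗ (TensorProduct.comm ℂ A A).toLinearMap) R
          ∘ₗ comul2
      = (TensorProduct.lid ℂ A).toLinearMap ∘ₗ
        TensorProduct.map R (LinearMap.mul' ℂ A) ∘ₗ comul2

/-- The cotriangularity (symmetry) condition
`R(a⁽¹⁾ ⊗ b⁽¹⁾) R(b⁽²⁾ ⊗ a⁽²⁾) = ε(a)ε(b)`. -/
def SymmCond (R : A ⊗[ℂ] A →ₗ[ℂ] ℂ) : Prop :=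
  mulC ∘ₗ TensorProduct.map R (R ∘ₗ (TensorProduct.comm ℂ A A).toLinearMap) ∘ₗ comul2
    = counit2

/-- A cotriangular structure: a coquasitriangular structure which in addition is
symmetric. -/
structure IsCotriangular (R : A ⊗[ℂ] A →ₗ[ℂ] ℂ) extends IsCoquasitriangular R : Prop where
  symm : SymmCond R

end QG

noncomputable section

open QG

variable {D H B A : Type}
variable [Ring D] [Algebra ℂ D] [Ring H] [HopfAlgebra ℂ H]
variable [Ring B] [Algebra ℂ B] [Ring A] [HopfAlgebra ℂ A]

namespace QG19

/-- The smash product multiplication on `D ⊗ H`: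
`(d ⊗ h)(e ⊗ g) = d (h⁽¹⁾ ▷ e) ⊗ h⁽²⁾ g`, for an action `act : H ⊗ D → D`. -/
def smashMul (act : H ⊗[ℂ] D →ₗ[ℂ] D) :
    (D ⊗[ℂ] H) ⊗[ℂ] (D ⊗[ℂ] H) →ₗ[ℂ] D ⊗[ℂ] H :=
  TensorProduct.map
      (LinearMap.mul' ℂ D ∘ₗ LinearMap.lTensor D act ∘ₗ (TensorProduct.assoc ℂ D H D).toLinearMap)
      (LinearMap.mul' ℂ H)
    ∘ₗ (tensorTensorTensorComm ℂ (D ⊗[ℂ] H) H D H).toLinearMap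
    ∘ₗ LinearMap.rTensor (D ⊗[ℂ] H)
        ((TensorProduct.assoc ℂ D H H).symm.toLinearMap
          ∘ₗ LinearMap.lTensor D (Coalgebra.comul (R := ℂ)))

/-- The bosonized coproduct on `B ⊗ A`:
`Δ(b ⊗ a) = (b⁽¹⁾ ⊗ b⁽²⁾⁽¹⁾ a⁽¹⁾) ⊗ (b⁽²⁾⁽⁰⁾ ⊗ a⁽²⁾)`, for a coaction
`β : B → A ⊗ B` and a coproduct `ΔB : B → B ⊗ B`. -/
def bosComul (β : B →ₗ[ℂ] A ⊗[ℂ] B) (ΔB : B →ₗ[ℂ] B ⊗[ℂ] B) :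
    B ⊗[ℂ] A →ₗ[ℂ] (B ⊗[ℂ] A) ⊗[ℂ] (B ⊗[ℂ] A) :=
  TensorProduct.map
      (LinearMap.lTensor B (LinearMap.mul' ℂ A) ∘ₗ (TensorProduct.assoc ℂ B A A).toLinearMap)
      LinearMap.id
    ∘ₗ (tensorTensorTensorComm ℂ (B ⊗[ℂ] A) B A A).toLinearMap
    ∘ₗ LinearMap.rTensor (A ⊗[ℂ] A) (TensorProduct.assoc ℂ B A B).symm.toLinearMap
    ∘ₗ TensorProduct.map (LinearMap.lTensor B β ∘ₗ ΔB) (Coalgebra.comul (R := ℂ))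

/-- The pairing `⟨d ⊗ h, b ⊗ a⟩ = ⟨d, b⟩⟨h, a⟩` between the bosonizations. -/
def bosPair (pD : D ⊗[ℂ] B →ₗ[ℂ] ℂ) (pHA : H ⊗[ℂ] A →ₗ[ℂ] ℂ) :
    (D ⊗[ℂ] H) ⊗[ℂ] (B ⊗[ℂ] A) →ₗ[ℂ] ℂ :=
  mulC ∘ₗ TensorProduct.map pD pHA ∘ₗ (tensorTensorTensorComm ℂ D H B A).toLinearMap

end QG19

set_option maxHeartbeats 2000000 in
set_option synthInstance.maxHeartbeats 400000 in
open QG19 in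
/-- Let `(H, R_H)` be a finite-dimensional quasitriangular Hopf
algebra and `(A, R_A)` a coquasitriangular Hopf algebra, dually paired compatibly;
let `D` be an `H`-module algebra and `B` an `A`-comodule coalgebra, dually paired
compatibly.  Then `⟨d ⊗ h, b ⊗ a⟩ := ⟨d, b⟩⟨h, a⟩` satisfies the multiplicativity
axiom of a Hopf pairing with respect to the smash product multiplication on
`D ⊗ H` and the bosonized coproduct on `B ⊗ A`. -/
theorem stmt_19
    -- the quasitriangular structure on H
    (RH : H ⊗[ℂ] H) [FiniteDimensional ℂ H]
    (hRHinv : ∃ RH' : H ⊗[ℂ] H, RH * RH' = 1 ∧ RH' * RH = 1)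
    (hRHqc : ∀ h : H, (Coalgebra.comul (R := ℂ) h) * RH
      = RH * (TensorProduct.comm ℂ H H (Coalgebra.comul (R := ℂ) h)))
    -- the coquasitriangular structure on A
    (RA : A ⊗[ℂ] A →ₗ[ℂ] ℂ) (hRA : IsCoquasitriangular RA)
    -- the Hopf pairing between H and A
    (pHA : H ⊗[ℂ] A →ₗ[ℂ] ℂ)
    (hp_mul_left : pHA ∘ₗ LinearMap.rTensor A (LinearMap.mul' ℂ H)
      = mulC ∘ₗ TensorProduct.map pHA pHA ∘ₗ (tensorTensorTensorComm ℂ H H A A).toLinearMap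
          ∘ₗ LinearMap.lTensor (H ⊗[ℂ] H) (Coalgebra.comul (R := ℂ)))
    (hp_mul_right : pHA ∘ₗ LinearMap.lTensor H (LinearMap.mul' ℂ A)
      = mulC ∘ₗ TensorProduct.map pHA pHA ∘ₗ (tensorTensorTensorComm ℂ H H A A).toLinearMap
          ∘ₗ LinearMap.rTensor (A ⊗[ℂ] A) (Coalgebra.comul (R := ℂ)))
    (hp_unit : (∀ a : A, pHA ((1 : H) ⊗ₜ[ℂ] a) = Coalgebra.counit (R := ℂ) a) ∧
      (∀ h : H, pHA (h ⊗ₜ[ℂ] (1 : A)) = Coalgebra.counit (R := ℂ) h))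
    -- compatibility of R_H and R_A through the pairing
    (hRR : ∀ z : A ⊗[ℂ] A,
      (mulC ∘ₗ TensorProduct.map pHA pHA ∘ₗ (tensorTensorTensorComm ℂ H H A A).toLinearMap)
        (RH ⊗ₜ[ℂ] z) = RA z)
    -- D is an H-module algebra
    (act : H ⊗[ℂ] D →ₗ[ℂ] D)
    (hact1 : ∀ d : D, act ((1 : H) ⊗ₜ[ℂ] d) = d)
    (hactmul : act ∘ₗ LinearMap.rTensor D (LinearMap.mul' ℂ H)
      = act ∘ₗ LinearMap.lTensor H act ∘ₗ (TensorProduct.assoc ℂ H H D).toLinearMap)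
    (hmodalg : act ∘ₗ LinearMap.lTensor H (LinearMap.mul' ℂ D)
      = LinearMap.mul' ℂ D ∘ₗ TensorProduct.map act act
          ∘ₗ (tensorTensorTensorComm ℂ H H D D).toLinearMap
          ∘ₗ LinearMap.rTensor (D ⊗[ℂ] D) (Coalgebra.comul (R := ℂ)))
    -- B is an A-comodule coalgebra
    (β : B →ₗ[ℂ] A ⊗[ℂ] B) (ΔB : B →ₗ[ℂ] B ⊗[ℂ] B)
    (hβcounit : (TensorProduct.lid ℂ B).toLinearMap
        ∘ₗ LinearMap.rTensor B (Coalgebra.counit (R := ℂ)) ∘ₗ β = LinearMap.id)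
    (hβcoassoc : LinearMap.rTensor B (Coalgebra.comul (R := ℂ)) ∘ₗ β
      = (TensorProduct.assoc ℂ A A B).symm.toLinearMap ∘ₗ LinearMap.lTensor A β ∘ₗ β)
    (hΔBcoassoc : LinearMap.rTensor B ΔB ∘ₗ ΔB
      = (TensorProduct.assoc ℂ B B B).symm.toLinearMap ∘ₗ LinearMap.lTensor B ΔB ∘ₗ ΔB)
    -- the pairing between D and B and its compatibilities
    (pD : D ⊗[ℂ] B →ₗ[ℂ] ℂ)
    (hpD_mul : pD ∘ₗ LinearMap.rTensor B (LinearMap.mul' ℂ D)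
      = mulC ∘ₗ TensorProduct.map pD pD ∘ₗ (tensorTensorTensorComm ℂ D D B B).toLinearMap
          ∘ₗ LinearMap.lTensor (D ⊗[ℂ] D) ΔB)
    (hcompat : pD ∘ₗ LinearMap.rTensor B act
      = mulC ∘ₗ TensorProduct.map pHA pD ∘ₗ (tensorTensorTensorComm ℂ H D A B).toLinearMap
          ∘ₗ LinearMap.lTensor (H ⊗[ℂ] D) β) :
    -- conclusion: the multiplicativity axiom for the pairing of the bosonizations
    bosPair pD pHA ∘ₗ LinearMap.rTensor (B ⊗[ℂ] A) (smashMul act)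
      = mulC ∘ₗ TensorProduct.map (bosPair pD pHA) (bosPair pD pHA)
          ∘ₗ (tensorTensorTensorComm ℂ (D ⊗[ℂ] H) (D ⊗[ℂ] H)
                (B ⊗[ℂ] A) (B ⊗[ℂ] A)).toLinearMap
          ∘ₗ LinearMap.lTensor ((D ⊗[ℂ] H) ⊗[ℂ] (D ⊗[ℂ] H)) (bosComul β ΔB) := by
  ext d h e g b a
  obtain ⟨sh, hh⟩ := TensorProduct.exists_finset (Coalgebra.comul (R := ℂ) h)
  obtain ⟨sa, ha⟩ := TensorProduct.exists_finset (Coalgebra.comul (R := ℂ) a)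
  obtain ⟨sb, hb⟩ := TensorProduct.exists_finset (ΔB b)
  choose rB hrB using fun y : B => TensorProduct.exists_finset (β y)
  simp only [TensorProduct.AlgebraTensorModule.curry_apply, TensorProduct.curry_apply,
    LinearMap.coe_restrictScalars, LinearMap.coe_comp, Function.comp_apply,
    LinearMap.rTensor_tmul, LinearMap.lTensor_tmul, LinearEquiv.coe_coe]
  simp only [QG19.smashMul, QG19.bosComul, QG19.bosPair, QG.mulC, hh, ha, hb, hrB,
    LinearMap.coe_comp, Function.comp_apply, LinearEquiv.coe_coe,
    LinearMap.rTensor_tmul, LinearMap.lTensor_tmul, TensorProduct.map_tmul,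
    TensorProduct.tmul_sum, TensorProduct.sum_tmul, map_sum,
    TensorProduct.assoc_tmul, TensorProduct.assoc_symm_tmul,
    TensorProduct.tensorTensorTensorComm_tmul, LinearMap.mul'_apply, LinearMap.id_coe, id_eq]
  have HpDmul : ∀ x : D, pD ((d * x) ⊗ₜ[ℂ] b) = ∑ j ∈ sb, pD (d ⊗ₜ[ℂ] j.1) * pD (x ⊗ₜ[ℂ] j.2) := by
    intro x
    have := LinearMap.congr_fun hpD_mul ((d ⊗ₜ[ℂ] x) ⊗ₜ[ℂ] b)
    simpa [QG.mulC, hb, TensorProduct.tmul_sum, TensorProduct.tensorTensorTensorComm_tmul,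
      LinearMap.mul'_apply] using this
  have HpL : ∀ h' : H, pHA ((h' * g) ⊗ₜ[ℂ] a) = ∑ l ∈ sa, pHA (h' ⊗ₜ[ℂ] l.1) * pHA (g ⊗ₜ[ℂ] l.2) := by
    intro h'
    have := LinearMap.congr_fun hp_mul_left ((h' ⊗ₜ[ℂ] g) ⊗ₜ[ℂ] a)
    simpa [QG.mulC, ha, TensorProduct.tmul_sum, TensorProduct.tensorTensorTensorComm_tmul,
      LinearMap.mul'_apply] using this
  have HpR : ∀ u v : A, pHA (h ⊗ₜ[ℂ] (u * v)) = ∑ i ∈ sh, pHA (i.1 ⊗ₜ[ℂ] u) * pHA (i.2 ⊗ₜ[ℂ] v) := by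
    intro u v
    have := LinearMap.congr_fun hp_mul_right (h ⊗ₜ[ℂ] (u ⊗ₜ[ℂ] v))
    simpa [QG.mulC, hh, TensorProduct.sum_tmul, TensorProduct.tensorTensorTensorComm_tmul,
      LinearMap.mul'_apply] using this
  have Hcomp : ∀ (h' : H) (y : B), pD (act (h' ⊗ₜ[ℂ] e) ⊗ₜ[ℂ] y)
      = ∑ k ∈ rB y, pHA (h' ⊗ₜ[ℂ] k.1) * pD (e ⊗ₜ[ℂ] k.2) := by
    intro h' y
    have := LinearMap.congr_fun hcompat ((h' ⊗ₜ[ℂ] e) ⊗ₜ[ℂ] y)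
    simpa [QG.mulC, hrB, TensorProduct.tmul_sum, TensorProduct.tensorTensorTensorComm_tmul,
      LinearMap.mul'_apply] using this
  simp only [HpDmul, HpL, HpR, Hcomp, Finset.sum_mul, Finset.mul_sum]
  rw [Finset.sum_comm]
  refine Finset.sum_congr rfl fun l _ => ?_
  rw [Finset.sum_comm]
  refine Finset.sum_congr rfl fun j _ => ?_
  rw [Finset.sum_comm]
  exact Finset.sum_congr rfl fun k _ => Finset.sum_congr rfl fun i _ => by ring
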